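/- arXiv:2406.11369 — 4 statements merged into one kernel-verified Lean document; each statement's English description precedes it below -/
import Mathlib

section
/- Let Ω₁,…,Ωₙ (n > 1) be nonempty compact convex sets in ℝᵈ. If (z, v₁,…,vₙ, r) is an optimal solution of the SIB problem (minimize r subject to ‖z − vᵢ‖ ≤ r and vᵢ ∈ Ωᵢ for all i), then z lies in the convex hull of the union of the Ωᵢ. -/
open Metric

theorem sib_center_in_hull {d n : ℕ} (hn : 1 < n)
    (Ω : Fin n → Set (EuclideanSpace ℝ (Fin d)))
    (hne : ∀ i, (Ω i).Nonempty) (hcpt : ∀ i, IsCompact (Ω i))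
    (hcvx : ∀ i, Convex ℝ (Ω i))
    (z : EuclideanSpace ℝ (Fin d)) (v : Fin n → EuclideanSpace ℝ (Fin d)) (r : ℝ)
    (hfeas : ∀ i, v i ∈ Ω i ∧ ‖z - v i‖ ≤ r)
    (hopt : ∀ (z' : EuclideanSpace ℝ (Fin d)) (v' : Fin n → EuclideanSpace ℝ (Fin d)) (r' : ℝ),
      (∀ i, v' i ∈ Ω i ∧ ‖z' - v' i‖ ≤ r') → r ≤ r') :
    z ∈ convexHull ℝ (⋃ i, Ω i) := by
  have hnn : Nonempty (Fin n) := ⟨⟨0, by omega⟩⟩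
  set D := convexHull ℝ (Set.range v) with hDdef
  have hvD : ∀ i, v i ∈ D := fun i =>
    subset_convexHull ℝ _ (Set.mem_range_self i)
  have hzD : z ∈ D := by
    by_contra hz
    have hD : Convex ℝ D := convex_convexHull ℝ _
    have hDcpt : IsCompact D := (Set.finite_range v).isCompact_convexHull (𝕜 := ℝ)
    have hDne : D.Nonempty := ⟨v (Classical.arbitrary _), hvD _⟩
    obtain ⟨p, hpD, hp⟩ :=
      exists_norm_eq_iInf_of_complete_convex hDne hDcpt.isComplete hD z
    have hinner := (norm_eq_iInf_iff_real_inner_le_zero hD hpD).mp hp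
    have hzp : z ≠ p := fun h => hz (h ▸ hpD)
    have hzppos : (0 : ℝ) < ‖z - p‖ := by
      simpa [sub_eq_zero] using norm_sub_pos_iff.mpr hzp
    have key : ∀ i, ‖p - v i‖ < ‖z - v i‖ := by
      intro i
      have h1 : inner ℝ (z - p) (v i - p) ≤ (0 : ℝ) := hinner (v i) (hvD i)
      have e : ‖z - v i‖ ^ 2 =
          ‖z - p‖ ^ 2 + 2 * inner ℝ (z - p) (p - v i) + ‖p - v i‖ ^ 2 := by
        have hsplit : z - v i = (z - p) + (p - v i) := by abel
        rw [hsplit, norm_add_sq_real]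
      have h2 : inner ℝ (z - p) (p - v i) = -(inner ℝ (z - p) (v i - p) : ℝ) := by
        rw [← inner_neg_right, neg_sub]
      nlinarith [norm_nonneg (p - v i), norm_nonneg (z - v i)]
    set r' : ℝ := Finset.univ.sup' Finset.univ_nonempty (fun i => ‖p - v i‖) with hr'
    have hfeas' : ∀ i, v i ∈ Ω i ∧ ‖p - v i‖ ≤ r' := fun i =>
      ⟨(hfeas i).1, Finset.le_sup' (fun i => ‖p - v i‖) (Finset.mem_univ i)⟩
    have hle : r ≤ r' := hopt p v r' hfeas'
    obtain ⟨j, _, hj⟩ := Finset.exists_mem_eq_sup' Finset.univ_nonempty (fun i => ‖p - v i‖)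
    have hlt : r' < r := by
      rw [hr', hj]
      exact lt_of_lt_of_le (key j) (hfeas j).2
    linarith
  have hsub : Set.range v ⊆ ⋃ i, Ω i := by
    rintro x ⟨i, rfl⟩
    exact Set.mem_iUnion.2 ⟨i, (hfeas i).1⟩
  exact convexHull_mono hsub hzD
end

section
/- If the sets Ω₁,…,Ωₙ are nonempty compact convex and ⋂ᵢ Ωᵢ = ∅, then the optimal value r* of the SIB problem is strictly positive. -/
theorem sib_positive_radius_of_empty_intersection {d n : ℕ} (hn : 1 < n)
    (Ω : Fin n → Set (EuclideanSpace ℝ (Fin d)))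
    (hne : ∀ i, (Ω i).Nonempty) (hcpt : ∀ i, IsCompact (Ω i))
    (hcvx : ∀ i, Convex ℝ (Ω i))
    (hempty : (⋂ i, Ω i) = ∅)
    (z : EuclideanSpace ℝ (Fin d)) (v : Fin n → EuclideanSpace ℝ (Fin d)) (r : ℝ)
    (hfeas : ∀ i, v i ∈ Ω i ∧ ‖z - v i‖ ≤ r)
    (hopt : ∀ (z' : EuclideanSpace ℝ (Fin d)) (v' : Fin n → EuclideanSpace ℝ (Fin d)) (r' : ℝ),
      (∀ i, v' i ∈ Ω i ∧ ‖z' - v' i‖ ≤ r') → r ≤ r') :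
    0 < r := by
  have i0 : Fin n := ⟨0, by omega⟩
  have hr0 : 0 ≤ r := le_trans (norm_nonneg _) (hfeas i0).2
  rcases lt_or_eq_of_le hr0 with h | h
  · exact h
  · exfalso
    have hz : z ∈ ⋂ i, Ω i := by
      refine Set.mem_iInter.2 fun i => ?_
      have h1 := (hfeas i).2
      have h2 : ‖z - v i‖ = 0 := le_antisymm (h ▸ h1) (norm_nonneg _)
      have : z = v i := by
        have := sub_eq_zero.mp (norm_eq_zero.mp h2)
        exact this
      exact this ▸ (hfeas i).1
    rw [hempty] at hz
    exact hz
end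

section
/- Let m ≥ 1, ν ∈ [1/m, 1], h ∈ ℝᵐ, and let k = ⌈1/ν⌉. Let j₁,…,jₘ be an ordering of indices with h_{j₁} ≤ h_{j₂} ≤ … ≤ h_{jₘ}. Define b ∈ ℝᵐ by b_{j} = ν for j ∈ {j₁,…,j_{k−1}}, b_{j_k} = 1 − ν(k−1), and b_j = 0 otherwise. Then b is feasible (b ≥ 0, ∑ⱼ bⱼ = 1, bⱼ ≤ ν for all j) and b minimizes hᵀb over the reduced simplex {b ∈ ℝᵐ : b ≥ 0, ∑ⱼ bⱼ = 1, bⱼ ≤ ν ∀j}. -/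
theorem reduced_simplex_linear_min {m : ℕ} (hm : 1 ≤ m)
    (ν : ℝ) (hν : ν ∈ Set.Icc (1 / (m : ℝ)) 1)
    (h : Fin m → ℝ)
    (σ : Equiv.Perm (Fin m)) (hσ : ∀ a b : Fin m, a ≤ b → h (σ a) ≤ h (σ b))
    (k : ℕ) (hk : k = ⌈1 / ν⌉₊)
    (b : Fin m → ℝ)
    (hb : ∀ j : Fin m,
      b j = if ((σ.symm j : ℕ) < k - 1) then ν
            else if ((σ.symm j : ℕ) = k - 1) then 1 - ν * (k - 1) else 0) :
    ((∀ j, 0 ≤ b j) ∧ (∑ j, b j) = 1 ∧ (∀ j, b j ≤ ν)) ∧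
    ∀ c : Fin m → ℝ, (∀ j, 0 ≤ c j) → (∑ j, c j) = 1 → (∀ j, c j ≤ ν) →
      (∑ j, h j * b j) ≤ (∑ j, h j * c j) := by
  have hm0 : (0:ℝ) < m := by exact_mod_cast Nat.lt_of_lt_of_le Nat.zero_lt_one hm
  have hν0 : 0 < ν := lt_of_lt_of_le (one_div_pos.mpr hm0) hν.1
  have h1ν : 1 ≤ 1/ν := one_le_one_div hν0 hν.2
  have hk1 : 1 ≤ k := by
    rw [hk]; exact Nat.one_le_ceil_iff.mpr (by linarith)
  have hkm : k ≤ m := by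
    rw [hk]
    refine Nat.ceil_le.mpr ?_
    rw [div_le_iff₀ hν0]
    have h1 : 1 ≤ ν * m := by
      have := (div_le_iff₀ hm0).mp hν.1
      linarith
    nlinarith
  have hkceil : 1/ν ≤ (k:ℝ) := by rw [hk]; exact Nat.le_ceil _
  have hνk : 1 ≤ ν * k := by
    rw [div_le_iff₀ hν0] at hkceil; linarith
  have hklt : (k:ℝ) < 1/ν + 1 := by
    rw [hk]; exact Nat.ceil_lt_add_one (by linarith)
  have hνk1 : ν * ((k:ℝ) - 1) < 1 := by
    have : ν * ((k:ℝ) - 1) < ν * (1/ν) := by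
      apply mul_lt_mul_of_pos_left (by linarith) hν0
    rwa [mul_one_div_cancel (ne_of_gt hν0)] at this
  have hckm : k - 1 < m := by omega
  have hcast : ((k - 1 : ℕ) : ℝ) = (k:ℝ) - 1 := by
    push_cast [Nat.cast_sub hk1]; ring
  have hbp : 0 ≤ 1 - ν * ((k:ℝ) - 1) := le_of_lt (by linarith)
  have hbν : 1 - ν * ((k:ℝ) - 1) ≤ ν := by nlinarith
  -- values of b composed with σ
  have hbi : ∀ i : Fin m, b (σ i) =
      if ((i : ℕ) < k - 1) then ν
      else if ((i : ℕ) = k - 1) then 1 - ν * ((k:ℝ) - 1) else 0 := by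
    intro i
    rw [hb (σ i), Equiv.symm_apply_apply]
  -- sum of b equals 1
  have hsumb : ∑ j, b j = 1 := by
    rw [← Equiv.sum_comp σ b]
    have : ∑ i : Fin m, b (σ i) =
        ∑ i ∈ Finset.range m, (if (i < k - 1) then ν
          else if (i = k - 1) then 1 - ν * ((k:ℝ) - 1) else 0) := by
      rw [← Fin.sum_univ_eq_sum_range]
      exact Finset.sum_congr rfl fun i _ => hbi i
    rw [this]
    have hsplit : ∀ i : ℕ, (if (i < k - 1) then ν
          else if (i = k - 1) then 1 - ν * ((k:ℝ) - 1) else 0)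
        = (if i < k - 1 then ν else 0) + (if i = k - 1 then 1 - ν * ((k:ℝ) - 1) else 0) := by
      intro i
      split_ifs with h1 h2 h3 <;> first | omega | ring
    simp_rw [hsplit]
    rw [Finset.sum_add_distrib, Finset.sum_ite_eq' (Finset.range m) (k-1)]
    rw [if_pos (Finset.mem_range.mpr hckm)]
    have h1 : ∑ i ∈ Finset.range m, (if i < k - 1 then ν else 0)
        = ∑ i ∈ Finset.range (k-1), (if i < k - 1 then ν else 0) := by
      refine (Finset.sum_subset (Finset.range_subset_range.mpr (by omega)) ?_).symm
      intro x hx hnx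
      rw [Finset.mem_range] at hnx
      rw [if_neg (by omega)]
    rw [h1]
    have h2 : ∑ i ∈ Finset.range (k-1), (if i < k - 1 then ν else 0)
        = ((k:ℝ) - 1) * ν := by
      rw [Finset.sum_congr rfl (fun i hi => if_pos (Finset.mem_range.mp hi))]
      rw [Finset.sum_const, Finset.card_range, nsmul_eq_mul, hcast]
    rw [h2]; ring
  have hb0 : ∀ j, 0 ≤ b j := by
    intro j
    rw [hb j]
    split_ifs <;> [linarith; exact hbp; exact le_refl 0]
  have hbν' : ∀ j, b j ≤ ν := by
    intro j
    rw [hb j]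
    split_ifs <;> [exact le_refl ν; exact hbν; linarith]
  refine ⟨⟨hb0, hsumb, hbν'⟩, ?_⟩
  intro c hc0 hc1 hcν
  set K : Fin m := ⟨k - 1, hckm⟩ with hK
  set t : ℝ := h (σ K) with ht
  -- pointwise bound
  have key : ∀ i : Fin m, (h (σ i) - t) * (b (σ i) - c (σ i)) ≤ 0 := by
    intro i
    rcases lt_trichotomy (i : ℕ) (k - 1) with h1 | h1 | h1
    · have hiK : i ≤ K := by
        rw [Fin.le_def]; exact le_of_lt h1
      have hg : h (σ i) - t ≤ 0 := by
        have := hσ i K hiK; linarith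
      have hβ : 0 ≤ b (σ i) - c (σ i) := by
        rw [hbi i, if_pos h1]
        have := hcν (σ i); linarith
      nlinarith
    · have : i = K := Fin.ext h1
      rw [this]; simp [ht]
    · have hKi : K ≤ i := by
        rw [Fin.le_def]; exact le_of_lt h1
      have hg : 0 ≤ h (σ i) - t := by
        have := hσ K i hKi; linarith
      have hβ : b (σ i) - c (σ i) ≤ 0 := by
        rw [hbi i, if_neg (by omega), if_neg (by omega)]
        have := hc0 (σ i); linarith
      nlinarith
  have hsb : ∑ i : Fin m, b (σ i) = 1 := by rw [Equiv.sum_comp σ b]; exact hsumb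
  have hsc : ∑ i : Fin m, c (σ i) = 1 := by rw [Equiv.sum_comp σ c]; exact hc1
  have main : ∑ i : Fin m, (h (σ i) - t) * (b (σ i) - c (σ i)) ≤ 0 :=
    Finset.sum_nonpos fun i _ => key i
  have expand : ∑ i : Fin m, (h (σ i) - t) * (b (σ i) - c (σ i)) =
      (∑ i : Fin m, h (σ i) * b (σ i)) - (∑ i : Fin m, h (σ i) * c (σ i))
      - t * (∑ i : Fin m, b (σ i)) + t * (∑ i : Fin m, c (σ i)) := by
    rw [Finset.mul_sum, Finset.mul_sum, ← Finset.sum_sub_distrib, ← Finset.sum_sub_distrib,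
      ← Finset.sum_add_distrib]
    exact Finset.sum_congr rfl fun i _ => by ring
  have e1 : ∑ i : Fin m, h (σ i) * b (σ i) = ∑ j, h j * b j :=
    Equiv.sum_comp σ (fun j => h j * b j)
  have e2 : ∑ i : Fin m, h (σ i) * c (σ i) = ∑ j, h j * c j :=
    Equiv.sum_comp σ (fun j => h j * c j)
  rw [expand, hsb, hsc, e1, e2] at main
  linarith
end

section
/- Let Ω₁,…,Ωₙ be nonempty compact convex subsets of ℝᵈ and suppose (z, v₁,…,vₙ, r) is a feasible solution of the SIB problem (‖z − vᵢ‖ ≤ r, vᵢ ∈ Ωᵢ) with z not in conv(⋃ᵢ Ωᵢ). Then letting z' be the projection of z onto conv(⋃ᵢ Ωᵢ) and r' = maxᵢ ‖vᵢ − z'‖, the tuple (z', v₁,…,vₙ, r') is feasible with r' < r. -/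
open scoped RealInnerProductSpace


theorem sib_projection_improves {d n : ℕ} (hn : 0 < n)
    (Ω : Fin n → Set (EuclideanSpace ℝ (Fin d)))
    (hne : ∀ i, (Ω i).Nonempty) (hcpt : ∀ i, IsCompact (Ω i))
    (hcvx : ∀ i, Convex ℝ (Ω i))
    (z : EuclideanSpace ℝ (Fin d)) (v : Fin n → EuclideanSpace ℝ (Fin d)) (r : ℝ)
    (hfeas : ∀ i, v i ∈ Ω i ∧ ‖z - v i‖ ≤ r)
    (hz : z ∉ convexHull ℝ (⋃ i, Ω i))
    (z' : EuclideanSpace ℝ (Fin d))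
    (hz' : z' ∈ convexHull ℝ (⋃ i, Ω i))
    (hproj : ∀ x ∈ convexHull ℝ (⋃ i, Ω i), ‖z - z'‖ ≤ ‖z - x‖)
    (r' : ℝ) (hr' : r' = ⨆ i, ‖v i - z'‖) :
    (∀ i, v i ∈ Ω i ∧ ‖z' - v i‖ ≤ r') ∧ r' < r := by
  haveI : Nonempty (Fin n) := ⟨⟨0, hn⟩⟩
  set K := convexHull ℝ (⋃ i, Ω i) with hK
  haveI : Nonempty K := ⟨⟨z', hz'⟩⟩
  have hKcvx : Convex ℝ K := convex_convexHull ℝ _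
  -- z' realizes the infimum distance
  have hinf : ‖z - z'‖ = ⨅ w : K, ‖z - (w : EuclideanSpace ℝ (Fin d))‖ := by
    apply le_antisymm
    · exact le_ciInf fun w => hproj w w.2
    · exact ciInf_le ⟨0, fun x ⟨w, hw⟩ => hw ▸ norm_nonneg _⟩ (⟨z', hz'⟩ : K)
  have hinner : ∀ w ∈ K, (inner ℝ (z - z') (w - z') : ℝ) ≤ 0 :=
    (norm_eq_iInf_iff_real_inner_le_zero hKcvx hz').mp hinf
  have hzz' : z ≠ z' := fun h => hz (h ▸ hz')
  have hmem : ∀ i, v i ∈ K := fun i =>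
    subset_convexHull ℝ _ (Set.mem_iUnion.mpr ⟨i, (hfeas i).1⟩)
  -- key strict inequality
  have hkey : ∀ i, ‖v i - z'‖ < ‖z - v i‖ := by
    intro i
    have h1 : (inner ℝ (z - z') (v i - z') : ℝ) ≤ 0 := hinner _ (hmem i)
    have h2 : (0:ℝ) < ‖z - z'‖ := norm_pos_iff.mpr (sub_ne_zero.mpr hzz')
    have hsq : ‖v i - z'‖ ^ 2 < ‖z - v i‖ ^ 2 := by
      have heq : z - v i = (z - z') - (v i - z') := by abel
      have hexp : ‖z - v i‖ ^ 2 =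
          ‖z - z'‖ ^ 2 - 2 * (inner ℝ (z - z') (v i - z') : ℝ) + ‖v i - z'‖ ^ 2 := by
        rw [heq]; exact norm_sub_sq_real _ _
      nlinarith [sq_nonneg ‖z - z'‖]
    exact lt_of_pow_lt_pow_left₀ 2 (norm_nonneg _) hsq
  have hbdd : BddAbove (Set.range fun i => ‖v i - z'‖) := Set.finite_range _ |>.bddAbove
  have hle : ∀ i, ‖v i - z'‖ ≤ r' := fun i => hr' ▸ le_ciSup hbdd i
  constructor
  · intro i
    refine ⟨(hfeas i).1, ?_⟩
    have := hle i
    rwa [norm_sub_rev] at this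
  · obtain ⟨i, hi⟩ := Finite.exists_max fun i => ‖v i - z'‖
    have : r' ≤ ‖v i - z'‖ := hr' ▸ ciSup_le hi
    exact lt_of_le_of_lt this (lt_of_lt_of_le (hkey i) (hfeas i).2)
end
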